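/- Suppose m ≥ 5 and n = 2m−3. Let S ⊆ [0,π]^n be the set of n-tuples of angles (with all entries strictly between 0 and π) that can be realised by a set of m points in the plane. Then the Hausdorff dimension of S is exactly n−1. -/

import Mathlib

open EuclideanGeometry

/-- A set `P` of points realises the angle `θ` if some three points of `P`
form this angle. -/
def Realises {d : ℕ} (P : Set (EuclideanSpace ℝ (Fin d))) (θ : ℝ) : Prop :=
  ∃ A B C : EuclideanSpace ℝ (Fin d),
    A ∈ P ∧ B ∈ P ∧ C ∈ P ∧ A ≠ B ∧ C ≠ B ∧ EuclideanGeometry.angle A B C = θ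

/-- The ray from `B` towards `A`, encoded by its vertex together with the
unit vector in its direction. -/
noncomputable def rayOf {d : ℕ} (B A : EuclideanSpace ℝ (Fin d)) :
    EuclideanSpace ℝ (Fin d) × EuclideanSpace ℝ (Fin d) :=
  (B, ‖A - B‖⁻¹ • (A - B))

/-- A tuple `θ` of angles is realised with multiplicity by `P` if each `θ i` is
realised at some vertex `B i` by points `A i, C i` of `P`, with the unordered
pairs of rays pairwise distinct. -/
def RealisesMult {d n : ℕ} (P : Set (EuclideanSpace ℝ (Fin d))) (θ : Fin n → ℝ) : Prop :=
  ∃ A B C : Fin n → EuclideanSpace ℝ (Fin d),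
    (∀ i, A i ∈ P ∧ B i ∈ P ∧ C i ∈ P ∧ A i ≠ B i ∧ C i ≠ B i ∧
      EuclideanGeometry.angle (A i) (B i) (C i) = θ i) ∧
    Function.Injective fun i =>
      ({rayOf (B i) (A i), rayOf (B i) (C i)} :
        Set (EuclideanSpace ℝ (Fin d) × EuclideanSpace ℝ (Fin d)))

/-! ## Auxiliary material -/

open Real
open scoped ENNReal NNReal

noncomputable def pt (a b : ℝ) : EuclideanSpace ℝ (Fin 2) :=
  (WithLp.equiv 2 (Fin 2 → ℝ)).symm ![a, b]

lemma pt_sub (a b c d : ℝ) : pt a b - pt c d = pt (a-c) (b-d) := by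
  ext i; fin_cases i <;> simp [pt]

lemma pt_apply0 (a b : ℝ) : pt a b 0 = a := by simp [pt]
lemma pt_apply1 (a b : ℝ) : pt a b 1 = b := by simp [pt]

lemma pt_inner (a b c d : ℝ) : (inner ℝ (pt a b) (pt c d) : ℝ) = a*c + b*d := by
  simp [PiLp.inner_apply, pt, Fin.sum_univ_two]
  ring

lemma pt_norm (a b : ℝ) : ‖pt a b‖ = Real.sqrt (a^2 + b^2) := by
  simp [EuclideanSpace.norm_eq, pt, Fin.sum_univ_two, sq]

lemma norm_coords (x : EuclideanSpace ℝ (Fin 2)) : ‖x‖ = Real.sqrt (x 0^2 + x 1^2) := by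
  rw [EuclideanSpace.norm_eq, Fin.sum_univ_two]
  simp [sq_abs]

lemma inner_coords (x y : EuclideanSpace ℝ (Fin 2)) :
    (inner ℝ x y : ℝ) = x 0 * y 0 + x 1 * y 1 := by
  rw [PiLp.inner_apply, Fin.sum_univ_two]
  simp [RCLike.inner_apply]
  ring

lemma pt_norm_polar (s γ : ℝ) (hs : 0 ≤ s) : ‖pt (s * Real.cos γ) (s * Real.sin γ)‖ = s := by
  rw [pt_norm]
  have : (s * Real.cos γ)^2 + (s * Real.sin γ)^2 = s^2 := by
    have := Real.sin_sq_add_cos_sq γ; nlinarith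
  rw [this, Real.sqrt_sq hs]

/-- Angle between two vectors given in polar coordinates. -/
lemma angle_polar (s t γ δ : ℝ) (hs : 0 < s) (ht : 0 < t) (h0 : 0 ≤ γ - δ) (h1 : γ - δ ≤ π) :
    InnerProductGeometry.angle (pt (s * Real.cos γ) (s * Real.sin γ))
      (pt (t * Real.cos δ) (t * Real.sin δ)) = γ - δ := by
  unfold InnerProductGeometry.angle
  rw [pt_inner, pt_norm_polar _ _ hs.le, pt_norm_polar _ _ ht.le]
  have : s * Real.cos γ * (t * Real.cos δ) + s * Real.sin γ * (t * Real.sin δ)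
      = (s * t) * Real.cos (γ - δ) := by rw [Real.cos_sub]; ring
  rw [this]
  have h2 : s * t * Real.cos (γ - δ) / (s * t) = Real.cos (γ - δ) := by
    field_simp
  rw [h2, Real.arccos_cos h0 h1]

noncomputable def ptUV (u v : ℝ) : EuclideanSpace ℝ (Fin 2) :=
  pt (Real.sin v / Real.sin (u+v) * Real.cos u) (Real.sin v / Real.sin (u+v) * Real.sin u)

section UV
variable {u v : ℝ} (hu : u ∈ Set.Ioo 0 (π/2)) (hv : v ∈ Set.Ioo 0 (π/2))
include hu hv

lemma sin_uv_pos : 0 < Real.sin (u+v) :=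
  Real.sin_pos_of_pos_of_lt_pi (by linarith [hu.1, hv.1]) (by linarith [hu.2, hv.2, Real.pi_pos])

lemma dUV_pos : 0 < Real.sin v / Real.sin (u+v) :=
  div_pos (Real.sin_pos_of_pos_of_lt_pi hv.1 (by linarith [hv.2, Real.pi_pos])) (sin_uv_pos hu hv)

lemma ptUV_snd_pos : 0 < ptUV u v 1 := by
  have := dUV_pos hu hv
  have hsu : 0 < Real.sin u := Real.sin_pos_of_pos_of_lt_pi hu.1 (by linarith [hu.2, Real.pi_pos])
  simpa [ptUV, pt] using mul_pos this hsu

lemma ptUV_ne_B0 : ptUV u v ≠ pt 0 0 := by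
  intro h
  have := ptUV_snd_pos hu hv
  rw [h] at this; simp [pt] at this

lemma ptUV_ne_B1 : ptUV u v ≠ pt 1 0 := by
  intro h
  have := ptUV_snd_pos hu hv
  rw [h] at this; simp [pt] at this

/-- angle at B0 = u -/
lemma angle_at_B0 : EuclideanGeometry.angle (ptUV u v) (pt 0 0) (pt 1 0) = u := by
  have hd := dUV_pos hu hv
  show InnerProductGeometry.angle (ptUV u v - pt 0 0) (pt 1 0 - pt 0 0) = u
  rw [pt_sub]
  have h1 : ptUV u v - pt 0 0 = ptUV u v := by rw [sub_eq_self]; ext i; fin_cases i <;> simp [pt]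
  rw [h1]
  have h2 : (1 - 0 : ℝ) = 1 * Real.cos 0 := by simp
  have h3 : (0 - 0 : ℝ) = 1 * Real.sin 0 := by simp
  rw [h2, h3]
  have := angle_polar (Real.sin v / Real.sin (u+v)) 1 u 0 hd one_pos
    (by simpa using hu.1.le) (by simpa using by linarith [hu.2, Real.pi_pos] : u - 0 ≤ π)
  simpa [ptUV] using this

/-- angle at B1 = v -/
lemma angle_at_B1 : EuclideanGeometry.angle (ptUV u v) (pt 1 0) (pt 0 0) = v := by
  have hsuv := sin_uv_pos hu hv
  have hsu : 0 < Real.sin u := Real.sin_pos_of_pos_of_lt_pi hu.1 (by linarith [hu.2, Real.pi_pos])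
  set s : ℝ := Real.sin u / Real.sin (u+v) with hs
  have hspos : 0 < s := div_pos hsu hsuv
  rw [EuclideanGeometry.angle_comm]
  show InnerProductGeometry.angle (pt 0 0 - pt 1 0) (ptUV u v - pt 1 0) = v
  have e1 : pt 0 0 - pt 1 0 = pt (1 * Real.cos π) (1 * Real.sin π) := by
    rw [pt_sub]; simp
  have hne : Real.sin (u+v) ≠ 0 := hsuv.ne'
  have e2 : ptUV u v - pt 1 0 = pt (s * Real.cos (π - v)) (s * Real.sin (π - v)) := by
    have c1 : Real.sin v / Real.sin (u+v) * Real.cos u - 1 = s * Real.cos (π - v) := by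
      rw [Real.cos_pi_sub, hs]
      field_simp
      rw [Real.sin_add]
      ring
    have c2 : Real.sin v / Real.sin (u+v) * Real.sin u - 0 = s * Real.sin (π - v) := by
      rw [Real.sin_pi_sub, hs]
      field_simp
      ring
    unfold ptUV; rw [pt_sub, c1, c2]
  rw [e1, e2]
  have := angle_polar 1 s π (π - v) one_pos hspos (by linarith [hv.1]) (by linarith [hv.2, Real.pi_pos])
  simpa using this

/-- angle at the apex -/
lemma angle_at_apex : EuclideanGeometry.angle (pt 0 0) (ptUV u v) (pt 1 0) = π - u - v := by
  have h2 : pt 0 0 ≠ ptUV u v := (ptUV_ne_B0 hu hv).symm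
  have h3 : pt 1 0 ≠ ptUV u v := (ptUV_ne_B1 hu hv).symm
  have hsum := EuclideanGeometry.angle_add_angle_add_angle_eq_pi (p₁ := ptUV u v)
    (p₂ := pt 0 0) (pt 1 0) h2
  rw [angle_at_B0 hu hv] at hsum
  rw [EuclideanGeometry.angle_comm (pt 0 0) (pt 1 0) (ptUV u v), angle_at_B1 hu hv] at hsum
  rw [EuclideanGeometry.angle_comm]
  linarith

end UV

lemma B0_ne_B1 : pt 0 0 ≠ pt 1 0 := by
  intro h
  have := congrArg (fun x : EuclideanSpace ℝ (Fin 2) => x 0) h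
  simp [pt] at this

noncomputable def projE (N : ℕ) (θ : EuclideanSpace ℝ (Fin (N+1))) :
    EuclideanSpace ℝ (Fin N) := WithLp.toLp 2 (fun j : Fin N => θ j.castSucc)

lemma proj_lipschitz (N : ℕ) : LipschitzWith 1 (projE N) := by
  apply LipschitzWith.of_dist_le_mul
  intro x y
  have hl := EuclideanSpace.dist_eq (projE N x) (projE N y)
  have hr := EuclideanSpace.dist_eq x y
  rw [hl, hr, NNReal.coe_one, one_mul]
  apply Real.sqrt_le_sqrt
  rw [Fin.sum_univ_castSucc (n := N)]
  have h0 : (0:ℝ) ≤ dist (x (Fin.last N)) (y (Fin.last N)) ^ 2 := sq_nonneg _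
  exact le_add_of_nonneg_right h0

/-! ## Lower bound -/

theorem lower_bound (k : ℕ) (hk : 1 ≤ k) :
    ((2*k : ℕ) : ℝ≥0∞) ≤ dimH {θ : EuclideanSpace ℝ (Fin (2*k+1)) |
      (∀ i, θ i ∈ Set.Ioo 0 π) ∧
      ∃ P : Finset (EuclideanSpace ℝ (Fin 2)), P.card = k + 2 ∧
        ∀ i, Realises (P : Set (EuclideanSpace ℝ (Fin 2))) (θ i)} := by
  classical
  set S := {θ : EuclideanSpace ℝ (Fin (2*k+1)) |
      (∀ i, θ i ∈ Set.Ioo 0 π) ∧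
      ∃ P : Finset (EuclideanSpace ℝ (Fin 2)), P.card = k + 2 ∧
        ∀ i, Realises (P : Set (EuclideanSpace ℝ (Fin 2))) (θ i)} with hS
  have hkR : (0:ℝ) < k := by exact_mod_cast hk
  set η : ℝ := π / (4*k) with hη
  have hηpos : 0 < η := by apply div_pos Real.pi_pos; positivity
  have hηk : (2*(k:ℝ)) * η = π/2 := by rw [hη]; field_simp; ring
  set a : Fin (2*k) → ℝ := fun j => if (j:ℕ) < k then (2*(j:ℕ)) * η else π/4 with ha
  set b : Fin (2*k) → ℝ := fun j => if (j:ℕ) < k then (2*(j:ℕ)+1) * η else π/3 with hb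
  have hab : ∀ j, a j < b j := by
    intro j
    by_cases h : (j:ℕ) < k
    · simp only [ha, hb, if_pos h]; nlinarith [hηpos]
    · simp only [ha, hb, if_neg h]; linarith [Real.pi_pos]
  set V : Set (EuclideanSpace ℝ (Fin (2*k))) :=
    {w | ∀ j, w j ∈ Set.Ioo (a j) (b j)} with hV
  have hVopen : IsOpen V := by
    have : V = ⋂ j, (fun w : EuclideanSpace ℝ (Fin (2*k)) => w j) ⁻¹' Set.Ioo (a j) (b j) := by
      ext w; simp [hV]
    rw [this]
    exact isOpen_iInter_of_finite fun j =>
      (isOpen_Ioo).preimage (EuclideanSpace.proj j).continuous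
  have hVne : V.Nonempty := by
    refine ⟨(WithLp.toLp 2 (fun j => (a j + b j)/2) : EuclideanSpace ℝ (Fin (2*k))), fun j => ?_⟩
    constructor <;> [linarith [hab j]; linarith [hab j]]
  have hdimV : dimH V = ((2*k : ℕ) : ℝ≥0∞) := by
    rw [Real.dimH_of_nonempty_interior (by rwa [hVopen.interior_eq])]
    simp [finrank_euclideanSpace_fin]
  have hVsub : V ⊆ projE (2*k) '' S := by
    intro w hw
    have hk0 : 0 < k := hk
    set u : Fin k → ℝ := fun i => w ⟨i.1, by omega⟩ with hu_def
    set v : Fin k → ℝ := fun i => w ⟨k + i.1, by omega⟩ with hv_def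
    have hu : ∀ i, u i ∈ Set.Ioo 0 (π/2) := by
      intro i
      have h1 := hw ⟨i.1, by omega⟩
      have hcond : ((⟨i.1, by omega⟩ : Fin (2*k)) : ℕ) < k := i.2
      simp only [ha, hb, hcond, if_true, Set.mem_Ioo] at h1
      have hle : ((2*(i:ℕ)+1) : ℝ) ≤ (2*(k:ℝ)) := by
        have hnat : 2*(i:ℕ)+1 ≤ 2*k := by have := i.2; omega
        exact_mod_cast hnat
      constructor
      · have hpos : (0:ℝ) ≤ (2*(i:ℕ)) * η := by positivity
        exact lt_of_le_of_lt hpos h1.1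
      · have := mul_le_mul_of_nonneg_right hle hηpos.le
        have h2 : u i < (2*(i:ℕ)+1) * η := h1.2
        linarith
    have huIoo : ∀ i : Fin k, u i ∈ Set.Ioo ((2*(i:ℕ)) * η) ((2*(i:ℕ)+1) * η) := by
      intro i
      have h1 := hw ⟨i.1, by omega⟩
      have hcond : ((⟨i.1, by omega⟩ : Fin (2*k)) : ℕ) < k := i.2
      simpa only [ha, hb, hcond, if_true, Set.mem_Ioo] using h1
    have hv : ∀ i, v i ∈ Set.Ioo (π/4) (π/3) := by
      intro i
      have h1 := hw ⟨k + i.1, by omega⟩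
      have hcond : ¬ ((⟨k + i.1, by omega⟩ : Fin (2*k)) : ℕ) < k := by simp
      simpa only [ha, hb, hcond, if_false, Set.mem_Ioo] using h1
    have hv' : ∀ i, v i ∈ Set.Ioo 0 (π/2) := by
      intro i
      have := hv i
      constructor <;> [linarith [Real.pi_pos, this.1]; linarith [this.2, Real.pi_pos]]
    have huinj : Function.Injective u := by
      intro i j hij
      by_contra hne
      have hne' : i.1 ≠ j.1 := fun h => hne (Fin.ext h)
      rcases Nat.lt_or_ge i.1 j.1 with h | h
      · have h1 := (huIoo i).2
        have h2 := (huIoo j).1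
        have : ((2*(i:ℕ)+1) : ℝ) ≤ ((2*(j:ℕ)) : ℝ) := by
          have : 2*(i:ℕ)+1 ≤ 2*(j:ℕ) := by omega
          exact_mod_cast this
        have := mul_le_mul_of_nonneg_right this hηpos.le
        linarith
      · have h : j.1 < i.1 := by omega
        have h1 := (huIoo j).2
        have h2 := (huIoo i).1
        have : ((2*(j:ℕ)+1) : ℝ) ≤ ((2*(i:ℕ)) : ℝ) := by
          have : 2*(j:ℕ)+1 ≤ 2*(i:ℕ) := by omega
          exact_mod_cast this
        have := mul_le_mul_of_nonneg_right this hηpos.le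
        linarith
    set Q : Fin k → EuclideanSpace ℝ (Fin 2) := fun i => ptUV (u i) (v i) with hQ
    have hQinj : Function.Injective Q := by
      intro i j hij
      apply huinj
      have h1 : u i = EuclideanGeometry.angle (Q i) (pt 0 0) (pt 1 0) :=
        (angle_at_B0 (hu i) (hv' i)).symm
      have h2 : u j = EuclideanGeometry.angle (Q j) (pt 0 0) (pt 1 0) :=
        (angle_at_B0 (hu j) (hv' j)).symm
      rw [h1, h2, hij]
    set P : Finset (EuclideanSpace ℝ (Fin 2)) :=
      insert (pt 0 0) (insert (pt 1 0) (Finset.image Q Finset.univ)) with hP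
    have hB0P : pt 0 0 ∈ (P : Set (EuclideanSpace ℝ (Fin 2))) := by simp [hP]
    have hB1P : pt 1 0 ∈ (P : Set (EuclideanSpace ℝ (Fin 2))) := by simp [hP]
    have hQP : ∀ i, Q i ∈ (P : Set (EuclideanSpace ℝ (Fin 2))) := by
      intro i; simp [hP]
    have hcard : P.card = k + 2 := by
      rw [hP, Finset.card_insert_of_notMem, Finset.card_insert_of_notMem,
        Finset.card_image_of_injective _ hQinj]
      · simp
      · intro hmem
        rcases Finset.mem_image.mp hmem with ⟨i, _, hi⟩
        exact ptUV_ne_B1 (hu i) (hv' i) hi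
      · intro hmem
        rcases Finset.mem_insert.mp hmem with h | h
        · exact B0_ne_B1 h
        · rcases Finset.mem_image.mp h with ⟨i, _, hi⟩
          exact ptUV_ne_B0 (hu i) (hv' i) hi
    set i₀ : Fin k := ⟨0, hk0⟩ with hi₀
    set θ : EuclideanSpace ℝ (Fin (2*k+1)) := WithLp.toLp 2 (fun j : Fin (2*k+1) =>
      if h : j.1 < 2*k then w ⟨j.1, h⟩ else π - u i₀ - v i₀) with hθ
    have hproj : projE (2*k) θ = w := by
      ext j
      have hlt : (Fin.castSucc j).1 < 2*k := j.2
      show θ (Fin.castSucc j) = w j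
      rw [hθ]
      simp only [dif_pos hlt]
      exact congrArg w (Fin.ext rfl)
    have hapex : 0 < π - u i₀ - v i₀ ∧ π - u i₀ - v i₀ < π := by
      have h1 := hu i₀; have h2 := hv' i₀
      constructor <;> [linarith [h1.2, h2.2]; linarith [h1.1, h2.1]]
    refine ⟨θ, ⟨?_, P, hcard, ?_⟩, hproj⟩
    · intro j
      rw [hθ]
      by_cases h : j.1 < 2*k
      · simp only [dif_pos h]
        have h1 := hw ⟨j.1, h⟩
        have h2 := hab ⟨j.1, h⟩
        constructor
        · have hbpos : 0 ≤ a ⟨j.1, h⟩ := by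
            by_cases hc : j.1 < k
            · simp only [ha, if_pos hc]; positivity
            · simp only [ha, if_neg hc]; linarith [Real.pi_pos]
          exact lt_of_le_of_lt hbpos h1.1
        · have hblt : b ⟨j.1, h⟩ < π := by
            by_cases hc : j.1 < k
            · simp only [hb, if_pos hc]
              have hle : ((2*j.1+1) : ℝ) ≤ (2*(k:ℝ)) := by
                have : 2*j.1+1 ≤ 2*k := by omega
                exact_mod_cast this
              have := mul_le_mul_of_nonneg_right hle hηpos.le
              linarith [Real.pi_pos]
            · simp only [hb, if_neg hc]; linarith [Real.pi_pos]
          exact lt_trans h1.2 hblt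
      · simp only [dif_neg h]
        exact ⟨hapex.1, hapex.2⟩
    · intro j
      rw [hθ]
      by_cases h : j.1 < 2*k
      · simp only [dif_pos h]
        by_cases hc : j.1 < k
        · set i : Fin k := ⟨j.1, hc⟩ with hi
          exact ⟨Q i, pt 0 0, pt 1 0, hQP i, hB0P, hB1P,
            ptUV_ne_B0 (hu i) (hv' i), B0_ne_B1.symm, angle_at_B0 (hu i) (hv' i)⟩
        · set i : Fin k := ⟨j.1 - k, by omega⟩ with hi
          have hvw : v i = w ⟨j.1, h⟩ := by
            have hidx : (⟨k + i.1, by omega⟩ : Fin (2*k)) = ⟨j.1, h⟩ := by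
              apply Fin.ext
              simp only [hi, Fin.val_mk]
              omega
            exact congrArg w hidx
          exact ⟨Q i, pt 1 0, pt 0 0, hQP i, hB1P, hB0P,
            ptUV_ne_B1 (hu i) (hv' i), B0_ne_B1,
            (angle_at_B1 (hu i) (hv' i)).trans hvw⟩
      · simp only [dif_neg h]
        exact ⟨pt 0 0, Q i₀, pt 1 0, hB0P, hQP i₀, hB1P,
          (ptUV_ne_B0 (hu i₀) (hv' i₀)).symm, (ptUV_ne_B1 (hu i₀) (hv' i₀)).symm,
          angle_at_apex (hu i₀) (hv' i₀)⟩
  calc ((2*k : ℕ) : ℝ≥0∞) = dimH V := hdimV.symm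
    _ ≤ dimH (projE (2*k) '' S) := dimH_mono hVsub
    _ ≤ dimH S := (proj_lipschitz (2*k)).dimH_image_le S

/-! ## Upper bound -/

/-- There is a similarity transformation carrying `O` to `(0,0)` and `O + w` to `(1,0)`,
preserving all angles and preserving distinctness. -/
lemma exists_similarity (O w : EuclideanSpace ℝ (Fin 2)) (hw : w ≠ 0) :
    ∃ σ : EuclideanSpace ℝ (Fin 2) → EuclideanSpace ℝ (Fin 2),
      σ O = pt 0 0 ∧ σ (O + w) = pt 1 0 ∧
      (∀ X Y, X ≠ Y → σ X ≠ σ Y) ∧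
      (∀ X Y Z, EuclideanGeometry.angle (σ X) (σ Y) (σ Z) = EuclideanGeometry.angle X Y Z) := by
  set r : ℝ := ‖w‖⁻¹ with hrdef
  have hwn : 0 < ‖w‖ := norm_pos_iff.mpr hw
  have hr : 0 < r := inv_pos.mpr hwn
  set a : ℝ := r * w 0 with hadef
  set b : ℝ := r * w 1 with hbdef
  have hw2 : w 0 ^ 2 + w 1 ^ 2 = ‖w‖ ^ 2 := by
    rw [norm_coords, Real.sq_sqrt (by positivity)]
  have hab1 : a^2 + b^2 = 1 := by
    rw [hadef, hbdef, hrdef]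
    field_simp
    linarith [hw2]
  set σ : EuclideanSpace ℝ (Fin 2) → EuclideanSpace ℝ (Fin 2) := fun X =>
    pt (r * ((X 0 - O 0) * a + (X 1 - O 1) * b))
       (r * (-(X 0 - O 0) * b + (X 1 - O 1) * a)) with hσ
  have hsub : ∀ X Y, σ X - σ Y =
      pt (r * ((X 0 - Y 0) * a + (X 1 - Y 1) * b))
         (r * (-(X 0 - Y 0) * b + (X 1 - Y 1) * a)) := by
    intro X Y
    rw [hσ]
    simp only
    rw [pt_sub]
    congr 1 <;> ring
  have hinner : ∀ X Y Z, (inner ℝ (σ X - σ Y) (σ Z - σ Y) : ℝ)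
      = r^2 * (inner ℝ (X - Y) (Z - Y) : ℝ) := by
    intro X Y Z
    rw [hsub, hsub, pt_inner, inner_coords]
    have e1 : (X - Y) 0 = X 0 - Y 0 := rfl
    have e2 : (X - Y) 1 = X 1 - Y 1 := rfl
    have e3 : (Z - Y) 0 = Z 0 - Y 0 := rfl
    have e4 : (Z - Y) 1 = Z 1 - Y 1 := rfl
    rw [e1, e2, e3, e4]
    linear_combination (r^2 * ((X 0 - Y 0) * (Z 0 - Y 0) + (X 1 - Y 1) * (Z 1 - Y 1))) * hab1
  have hnorm : ∀ X Y, ‖σ X - σ Y‖ = r * ‖X - Y‖ := by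
    intro X Y
    rw [hsub, norm_coords, pt_apply0, pt_apply1, norm_coords]
    have e1 : (X - Y) 0 = X 0 - Y 0 := rfl
    have e2 : (X - Y) 1 = X 1 - Y 1 := rfl
    rw [e1, e2]
    have key : (r * ((X 0 - Y 0) * a + (X 1 - Y 1) * b))^2
        + (r * (-(X 0 - Y 0) * b + (X 1 - Y 1) * a))^2
        = r^2 * ((X 0 - Y 0)^2 + (X 1 - Y 1)^2) := by
      linear_combination (r^2 * ((X 0 - Y 0)^2 + (X 1 - Y 1)^2)) * hab1
    rw [key, Real.sqrt_mul (sq_nonneg r), Real.sqrt_sq hr.le]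
  refine ⟨σ, ?_, ?_, ?_, ?_⟩
  · rw [hσ]; simp only
    have : pt (r * ((O 0 - O 0) * a + (O 1 - O 1) * b))
        (r * (-(O 0 - O 0) * b + (O 1 - O 1) * a)) = pt 0 0 := by
      congr 1 <;> ring
    exact this
  · rw [hσ]; simp only
    have e1 : (O + w) 0 - O 0 = w 0 := by show O 0 + w 0 - O 0 = w 0; ring
    have e2 : (O + w) 1 - O 1 = w 1 := by show O 1 + w 1 - O 1 = w 1; ring
    rw [e1, e2]
    have c1 : r * (w 0 * a + w 1 * b) = 1 := by
      rw [hadef, hbdef]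
      have : r * (w 0 * (r * w 0) + w 1 * (r * w 1)) = r^2 * (w 0^2 + w 1^2) := by ring
      rw [this, hw2, hrdef]
      field_simp
    have c2 : r * (-(w 0) * b + w 1 * a) = 0 := by
      rw [hadef, hbdef]; ring
    rw [c1, c2]
  · intro X Y hXY
    intro h
    apply hXY
    have h0 : ‖σ X - σ Y‖ = 0 := by rw [h, sub_self, norm_zero]
    rw [hnorm] at h0
    have : ‖X - Y‖ = 0 := by
      rcases mul_eq_zero.mp h0 with h' | h'
      · exact absurd h' hr.ne'
      · exact h'
    rw [norm_eq_zero, sub_eq_zero] at this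
    exact this
  · intro X Y Z
    show Real.arccos ((inner ℝ (σ X - σ Y) (σ Z - σ Y) : ℝ) / (‖σ X - σ Y‖ * ‖σ Z - σ Y‖))
      = Real.arccos ((inner ℝ (X - Y) (Z - Y) : ℝ) / (‖X - Y‖ * ‖Z - Y‖))
    rw [hinner, hnorm, hnorm]
    congr 1
    rw [show r * ‖X - Y‖ * (r * ‖Z - Y‖) = r^2 * (‖X - Y‖ * ‖Z - Y‖) by ring]
    exact mul_div_mul_left _ _ (pow_ne_zero 2 hr.ne')

/-- the angle map is C¹ where the vectors are nonzero and the angle is not 0 or π -/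
lemma contDiffAt_angle {X : Type*} [NormedAddCommGroup X] [NormedSpace ℝ X]
    {f g : X → EuclideanSpace ℝ (Fin 2)} {x₀ : X}
    (hf : ContDiffAt ℝ 1 f x₀) (hg : ContDiffAt ℝ 1 g x₀)
    (hf0 : f x₀ ≠ 0) (hg0 : g x₀ ≠ 0)
    (hang : InnerProductGeometry.angle (f x₀) (g x₀) ∈ Set.Ioo 0 π) :
    ContDiffAt ℝ 1 (fun x => InnerProductGeometry.angle (f x) (g x)) x₀ := by
  have hden : ‖f x₀‖ * ‖g x₀‖ ≠ 0 :=
    mul_ne_zero (norm_ne_zero_iff.mpr hf0) (norm_ne_zero_iff.mpr hg0)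
  have hratio : ContDiffAt ℝ 1
      (fun x => (inner ℝ (f x) (g x) : ℝ) / (‖f x‖ * ‖g x‖)) x₀ :=
    (hf.inner ℝ hg).div ((hf.norm ℝ hf0).mul (hg.norm ℝ hg0)) hden
  have hval : (inner ℝ (f x₀) (g x₀) : ℝ) / (‖f x₀‖ * ‖g x₀‖)
      = Real.cos (InnerProductGeometry.angle (f x₀) (g x₀)) :=
    (InnerProductGeometry.cos_angle _ _).symm
  set α := InnerProductGeometry.angle (f x₀) (g x₀) with hα
  have hlt1 : Real.cos α < 1 := by
    have := Real.cos_lt_cos_of_nonneg_of_le_pi le_rfl hang.2.le hang.1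
    rwa [Real.cos_zero] at this
  have hgt : -1 < Real.cos α := by
    have := Real.cos_lt_cos_of_nonneg_of_le_pi hang.1.le le_rfl hang.2
    rwa [Real.cos_pi] at this
  have harccos : ContDiffAt ℝ 1 Real.arccos
      ((inner ℝ (f x₀) (g x₀) : ℝ) / (‖f x₀‖ * ‖g x₀‖)) := by
    rw [hval]
    exact Real.contDiffAt_arccos (ne_of_gt hgt) (ne_of_lt hlt1)
  exact harccos.comp x₀ hratio

section Upper

variable {k : ℕ}

/-- normalized configuration built from free points -/
noncomputable def Qcfg (x : Fin k → EuclideanSpace ℝ (Fin 2)) (j : Fin (k+2)) :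
    EuclideanSpace ℝ (Fin 2) :=
  if h0 : j.1 = 0 then pt 0 0 else if h1 : j.1 = 1 then pt 1 0
    else x ⟨j.1 - 2, by omega⟩

lemma contDiff_Qcfg (j : Fin (k+2)) :
    ContDiff ℝ 1 (fun x : Fin k → EuclideanSpace ℝ (Fin 2) => Qcfg x j) := by
  unfold Qcfg
  by_cases h0 : j.1 = 0
  · simp only [dif_pos h0]; exact contDiff_const
  · by_cases h1 : j.1 = 1
    · simp only [dif_neg h0, dif_pos h1]; exact contDiff_const
    · simp only [dif_neg h0, dif_neg h1]
      exact (ContinuousLinearMap.proj (R := ℝ)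
        (φ := fun _ : Fin k => EuclideanSpace ℝ (Fin 2)) ⟨j.1 - 2, by omega⟩).contDiff

/-- the tuple-of-angles map for a choice function c -/
noncomputable def Hmap (c : Fin (2*k+1) → Fin (k+2) × Fin (k+2) × Fin (k+2))
    (x : Fin k → EuclideanSpace ℝ (Fin 2)) : EuclideanSpace ℝ (Fin (2*k+1)) :=
  WithLp.toLp 2 (fun i => EuclideanGeometry.angle (Qcfg x (c i).1) (Qcfg x (c i).2.1) (Qcfg x (c i).2.2))

def Uset (c : Fin (2*k+1) → Fin (k+2) × Fin (k+2) × Fin (k+2)) :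
    Set (Fin k → EuclideanSpace ℝ (Fin 2)) :=
  {x | ∀ i, Qcfg x (c i).1 ≠ Qcfg x (c i).2.1 ∧ Qcfg x (c i).2.2 ≠ Qcfg x (c i).2.1 ∧
    EuclideanGeometry.angle (Qcfg x (c i).1) (Qcfg x (c i).2.1) (Qcfg x (c i).2.2)
      ∈ Set.Ioo 0 π}

lemma dimH_Hmap_image (c : Fin (2*k+1) → Fin (k+2) × Fin (k+2) × Fin (k+2)) :
    dimH (Hmap c '' Uset c) ≤ ((2*k : ℕ) : ℝ≥0∞) := by
  have hloc : ∀ x ∈ Uset c, ∃ C : ℝ≥0, ∃ t ∈ nhdsWithin x (Uset c),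
      LipschitzOnWith C (Hmap c) t := by
    intro x hx
    have hcd : ContDiffAt ℝ 1 (Hmap c) x := by
      rw [contDiffAt_piLp]
      intro i
      have hf : ContDiffAt ℝ 1
          (fun y : Fin k → EuclideanSpace ℝ (Fin 2) => Qcfg y (c i).1 - Qcfg y (c i).2.1) x :=
        ((contDiff_Qcfg (c i).1).sub (contDiff_Qcfg (c i).2.1)).contDiffAt
      have hg : ContDiffAt ℝ 1
          (fun y : Fin k → EuclideanSpace ℝ (Fin 2) => Qcfg y (c i).2.2 - Qcfg y (c i).2.1) x :=
        ((contDiff_Qcfg (c i).2.2).sub (contDiff_Qcfg (c i).2.1)).contDiffAt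
      have hf0 : Qcfg x (c i).1 - Qcfg x (c i).2.1 ≠ 0 := sub_ne_zero.mpr (hx i).1
      have hg0 : Qcfg x (c i).2.2 - Qcfg x (c i).2.1 ≠ 0 := sub_ne_zero.mpr (hx i).2.1
      exact contDiffAt_angle hf hg hf0 hg0 (hx i).2.2
    obtain ⟨C, t, ht, hlip⟩ := hcd.exists_lipschitzOnWith
    exact ⟨C, t, nhdsWithin_le_nhds ht, hlip⟩
  calc dimH (Hmap c '' Uset c) ≤ dimH (Uset c) :=
        dimH_image_le_of_locally_lipschitzOn hloc
    _ ≤ dimH (Set.univ : Set (Fin k → EuclideanSpace ℝ (Fin 2))) := dimH_mono (Set.subset_univ _)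
    _ = ((2*k : ℕ) : ℝ≥0∞) := by
        rw [Real.dimH_univ_eq_finrank]
        congr 1
        rw [Module.finrank_pi_fintype, Finset.sum_congr rfl
          (fun i _ => finrank_euclideanSpace_fin)]
        simp [Finset.sum_const, mul_comm]

lemma mem_image_of_mem_S {θ : EuclideanSpace ℝ (Fin (2*k+1))}
    (hIoo : ∀ i, θ i ∈ Set.Ioo 0 π)
    (P : Finset (EuclideanSpace ℝ (Fin 2))) (hcard : P.card = k + 2)
    (hreal : ∀ i, Realises (P : Set (EuclideanSpace ℝ (Fin 2))) (θ i)) :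
    ∃ c : Fin (2*k+1) → Fin (k+2) × Fin (k+2) × Fin (k+2),
      θ ∈ Hmap c '' Uset c := by
  classical
  have e : {x // x ∈ P} ≃ Fin (k+2) := P.equivFin.trans (finCongr hcard)
  set p : Fin (k+2) → EuclideanSpace ℝ (Fin 2) := fun j => (e.symm j : EuclideanSpace ℝ (Fin 2))
    with hp
  have hpinj : Function.Injective p := fun i j hij => by
    have := Subtype.coe_injective hij
    exact e.symm.injective this
  have hpmem : ∀ j, p j ∈ P := fun j => (e.symm j).2
  have hpsurj : ∀ A ∈ P, ∃ j, p j = A := by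
    intro A hA
    exact ⟨e ⟨A, hA⟩, by rw [hp]; simp⟩
  have h01 : (0 : Fin (k+2)) ≠ 1 := by
    intro h
    have := congrArg Fin.val h
    simp [Fin.val_one] at this
  have hw : p 1 - p 0 ≠ 0 := sub_ne_zero.mpr (fun h => h01 (hpinj h.symm))
  obtain ⟨σ, hσ0, hσ1, hσinj, hσang⟩ := exists_similarity (p 0) (p 1 - p 0) hw
  have hσp1 : σ (p 1) = pt 1 0 := by
    have : p 0 + (p 1 - p 0) = p 1 := by abel
    rw [← this]; exact hσ1
  set x : Fin k → EuclideanSpace ℝ (Fin 2) := fun i => σ (p ⟨i.1 + 2, by omega⟩) with hx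
  have hQq : ∀ j, Qcfg x j = σ (p j) := by
    intro j
    unfold Qcfg
    by_cases h0 : j.1 = 0
    · simp only [dif_pos h0]
      have : j = 0 := Fin.ext (by simpa using h0)
      rw [this, ← hσ0]
    · by_cases h1 : j.1 = 1
      · simp only [dif_neg h0, dif_pos h1]
        have : j = 1 := Fin.ext (by simpa [Fin.val_one] using h1)
        rw [this, ← hσp1]
      · simp only [dif_neg h0, dif_neg h1]
        rw [hx]
        simp only
        have hj : (⟨j.1 - 2 + 2, by omega⟩ : Fin (k+2)) = j := Fin.ext (by simp only; omega)
        rw [hj]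
  have hchoice : ∀ i, ∃ abc : Fin (k+2) × Fin (k+2) × Fin (k+2),
      p abc.1 ≠ p abc.2.1 ∧ p abc.2.2 ≠ p abc.2.1 ∧
      EuclideanGeometry.angle (p abc.1) (p abc.2.1) (p abc.2.2) = θ i := by
    intro i
    obtain ⟨A, B, C, hA, hB, hC, hAB, hCB, hang⟩ := hreal i
    obtain ⟨ja, hja⟩ := hpsurj A hA
    obtain ⟨jb, hjb⟩ := hpsurj B hB
    obtain ⟨jc, hjc⟩ := hpsurj C hC
    exact ⟨(ja, jb, jc), by rw [hja, hjb]; exact hAB, by rw [hjc, hjb]; exact hCB,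
      by rw [hja, hjb, hjc]; exact hang⟩
  choose c hc1 hc2 hc3 using hchoice
  refine ⟨c, x, ?_, ?_⟩
  · intro i
    rw [hQq, hQq, hQq]
    refine ⟨hσinj _ _ (hc1 i), hσinj _ _ (hc2 i), ?_⟩
    rw [hσang, hc3 i]
    exact hIoo i
  · ext i
    show EuclideanGeometry.angle (Qcfg x (c i).1) (Qcfg x (c i).2.1) (Qcfg x (c i).2.2) = θ i
    rw [hQq, hQq, hQq, hσang, hc3 i]

end Upper

theorem upper_bound (k : ℕ) :
    dimH {θ : EuclideanSpace ℝ (Fin (2*k+1)) |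
      (∀ i, θ i ∈ Set.Ioo 0 π) ∧
      ∃ P : Finset (EuclideanSpace ℝ (Fin 2)), P.card = k + 2 ∧
        ∀ i, Realises (P : Set (EuclideanSpace ℝ (Fin 2))) (θ i)} ≤ ((2*k : ℕ) : ℝ≥0∞) := by
  have hsub : {θ : EuclideanSpace ℝ (Fin (2*k+1)) |
      (∀ i, θ i ∈ Set.Ioo 0 π) ∧
      ∃ P : Finset (EuclideanSpace ℝ (Fin 2)), P.card = k + 2 ∧
        ∀ i, Realises (P : Set (EuclideanSpace ℝ (Fin 2))) (θ i)} ⊆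
      ⋃ c : Fin (2*k+1) → Fin (k+2) × Fin (k+2) × Fin (k+2), Hmap c '' Uset c := by
    rintro θ ⟨h1, P, h2, h3⟩
    obtain ⟨c, hc⟩ := mem_image_of_mem_S h1 P h2 h3
    exact Set.mem_iUnion.mpr ⟨c, hc⟩
  calc dimH _ ≤ dimH (⋃ c : Fin (2*k+1) → Fin (k+2) × Fin (k+2) × Fin (k+2),
        Hmap c '' Uset c) := dimH_mono hsub
    _ = ⨆ c : Fin (2*k+1) → Fin (k+2) × Fin (k+2) × Fin (k+2),
        dimH (Hmap c '' Uset c) := dimH_iUnion _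
    _ ≤ ((2*k : ℕ) : ℝ≥0∞) := iSup_le fun c => dimH_Hmap_image c

/-- for `m ≥ 5` and `n = 2m-3`, the set of `n`-tuples of angles
in `(0, π)` realisable by `m` points in the plane has Hausdorff dimension
exactly `n - 1`. -/
theorem statement12 (m n : ℕ) (hm : 5 ≤ m) (hn : n = 2 * m - 3) :
    dimH {θ : EuclideanSpace ℝ (Fin n) | (∀ i, θ i ∈ Set.Ioo 0 Real.pi) ∧
        ∃ P : Finset (EuclideanSpace ℝ (Fin 2)), P.card = m ∧
          ∀ i, Realises (P : Set (EuclideanSpace ℝ (Fin 2))) (θ i)} = (n - 1 : ℕ) := by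
  obtain ⟨k, rfl⟩ : ∃ k, m = k + 2 := ⟨m - 2, by omega⟩
  have hk : 1 ≤ k := by omega
  have hn' : n = 2*k+1 := by omega
  subst hn'
  have hcast : ((2*k+1 - 1 : ℕ) : ℝ≥0∞) = ((2*k : ℕ) : ℝ≥0∞) := by norm_num
  rw [hcast]
  exact le_antisymm (upper_bound k) (lower_bound k hk)
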